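/- The spherical elliptic coordinate system is orthogonal: if q_i(u_1,...,u_n) satisfy q_i^2 = ∏_j (b_i − u_j)/∏_{k≠i}(b_i − b_k), then for i ≠ j the metric coefficient g_{ij} = (1/4) Σ_{k=0}^n q_k^2 / ((u_i − b_k)(u_j − b_k)) vanishes, and g_{jj} = −U'(u_j)/(4B(u_j)) where U(u) = ∏_{m=1}^n (u − u_m) and B(u) = ∏_{k=0}^n (u − b_k). -/

import Mathlib

open Polynomial Finset

lemma coeff_lagrange_basis {ι : Type*} [DecidableEq ι] (s : Finset ι) (v : ι → ℝ) {i : ι}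
    (hi : i ∈ s) :
    (Lagrange.basis s v i).coeff (#s - 1) = ∏ j ∈ s.erase i, (v i - v j)⁻¹ := by
  have : Lagrange.basis s v i
      = C (∏ j ∈ s.erase i, (v i - v j)⁻¹) * Lagrange.nodal (s.erase i) v := by
    rw [Lagrange.basis, Lagrange.nodal]
    simp_rw [Lagrange.basisDivisor]
    rw [prod_mul_distrib, map_prod]
  rw [this, coeff_C_mul]
  have hcard : #(s.erase i) = #s - 1 := card_erase_of_mem hi
  have hm : (Lagrange.nodal (s.erase i) v).coeff (#s - 1) = 1 := by
    have := (Lagrange.nodal_monic (s := s.erase i) (v := v)).coeff_natDegree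
    rwa [Lagrange.natDegree_nodal, hcard] at this
  rw [hm, mul_one]

/-- Key identity: if `P` has degree `< #s - 1` then the Lagrange-type sum vanishes. -/
lemma sum_eval_mul_prod_inv_eq_zero {ι : Type*} [DecidableEq ι] (s : Finset ι) (v : ι → ℝ)
    (hvs : Set.InjOn v s) (P : ℝ[X]) (hP : P.degree < (#s - 1 : ℕ)) :
    ∑ i ∈ s, P.eval (v i) * ∏ j ∈ s.erase i, (v i - v j)⁻¹ = 0 := by
  have hPs : P.degree < (#s : ℕ) := lt_of_lt_of_le hP (by exact_mod_cast Nat.sub_le _ _)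
  have hinterp := Lagrange.eq_interpolate hvs hPs
  have hc := congrArg (fun q : ℝ[X] => q.coeff (#s - 1)) hinterp
  simp only [Lagrange.interpolate_apply, finset_sum_coeff, coeff_C_mul] at hc
  rw [Polynomial.coeff_eq_zero_of_degree_lt hP] at hc
  have h2 : ∑ i ∈ s, P.eval (v i) * ∏ j ∈ s.erase i, (v i - v j)⁻¹
      = ∑ x ∈ s, P.eval (v x) * (Lagrange.basis s v x).coeff (#s - 1) :=
    sum_congr rfl fun i hi => by rw [coeff_lagrange_basis s v hi]
  rw [h2, ← hc]

theorem elliptic_coordinates_orthogonal (n : ℕ) (b : Fin (n+1) → ℝ)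
    (u : Fin n → ℝ) (hmono : StrictMono b)
    (hinter : ∀ j : Fin n, b j.castSucc < u j ∧ u j < b j.succ) :
    (∀ i j : Fin n, i ≠ j →
      (1/4) * ∑ k, ((∏ m, (b k - u m)) / (∏ l ∈ Finset.univ \ {k}, (b k - b l))) /
        ((u i - b k) * (u j - b k)) = 0) ∧
    (∀ j : Fin n,
      (1/4) * ∑ k, ((∏ m, (b k - u m)) / (∏ l ∈ Finset.univ \ {k}, (b k - b l))) /
        ((u j - b k)^2) =
      -(deriv (fun t => ∏ m, (t - u m)) (u j)) / (4 * ∏ k, (u j - b k))) := by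
  have hbinj : Function.Injective b := hmono.injective
  have hub : ∀ (j : Fin n) (k : Fin (n+1)), u j ≠ b k := by
    intro j k
    rcases le_or_gt k j.castSucc with h | h
    · exact ne_of_gt (lt_of_le_of_lt (hmono.monotone h) (hinter j).1)
    · have hk : j.succ ≤ k := Fin.castSucc_lt_iff_succ_le.mp h
      exact ne_of_lt (lt_of_lt_of_le (hinter j).2 (hmono.monotone hk))
  constructor
  · -- off-diagonal
    intro i j hij
    set P : ℝ[X] := Lagrange.nodal ((univ : Finset (Fin n)) \ {i, j}) u with hPdef
    have hcard2 : #((univ : Finset (Fin n)) \ {i, j}) = n - 2 := by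
      rw [card_sdiff_of_subset (subset_univ _), card_insert_of_notMem (by simpa using hij),
        card_singleton, card_univ, Fintype.card_fin]
    have hdeg : P.degree < (#(univ : Finset (Fin (n+1))) - 1 : ℕ) := by
      rw [hPdef, Lagrange.degree_nodal, hcard2, card_univ, Fintype.card_fin]
      exact_mod_cast Nat.lt_of_lt_of_le (Nat.sub_lt_of_pos_le (by norm_num) (by omega)) (by omega)
    have hkey := sum_eval_mul_prod_inv_eq_zero univ b hbinj.injOn P hdeg
    have hterm : ∀ k : Fin (n+1),
        ((∏ m, (b k - u m)) / (∏ l ∈ Finset.univ \ {k}, (b k - b l))) /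
          ((u i - b k) * (u j - b k))
        = P.eval (b k) * ∏ l ∈ univ.erase k, (b k - b l)⁻¹ := by
      intro k
      have hc1 : b k - u i ≠ 0 := sub_ne_zero.mpr (Ne.symm (hub i k))
      have hc2 : b k - u j ≠ 0 := sub_ne_zero.mpr (Ne.symm (hub j k))
      have hsplit : ∏ m, (b k - u m)
          = (∏ m ∈ (univ : Finset (Fin n)) \ {i, j}, (b k - u m))
            * ((b k - u i) * (b k - u j)) := by
        rw [← prod_sdiff (subset_univ ({i, j} : Finset (Fin n))),
          prod_pair hij]
      rw [hsplit, prod_inv_distrib, ← div_eq_mul_inv, hPdef, Lagrange.eval_nodal,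
        show (u i - b k) * (u j - b k) = (b k - u i) * (b k - u j) by ring,
        div_div, mul_comm (∏ l ∈ Finset.univ \ {k}, (b k - b l)) _, ← div_div,
        mul_div_assoc, div_self (mul_ne_zero hc1 hc2), mul_one, erase_eq]
    rw [show (∑ k, ((∏ m, (b k - u m)) / (∏ l ∈ Finset.univ \ {k}, (b k - b l))) /
        ((u i - b k) * (u j - b k)))
      = ∑ k, P.eval (b k) * ∏ l ∈ univ.erase k, (b k - b l)⁻¹
      from sum_congr rfl fun k _ => hterm k, hkey, mul_zero]
  · -- diagonal
    intro j
    set v : Option (Fin (n+1)) → ℝ := fun o => o.elim (u j) b with hvdef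
    have hvinj : Function.Injective v := by
      intro o o' h
      match o, o' with
      | none, none => rfl
      | none, some k => exact absurd h (hub j k)
      | some k, none => exact absurd h.symm (hub j k)
      | some k, some l => exact congrArg some (hbinj h)
    set P : ℝ[X] := Lagrange.nodal ((univ : Finset (Fin n)).erase j) u with hPdef
    have hcards : #(univ : Finset (Option (Fin (n+1)))) = n + 2 := by
      rw [card_univ, Fintype.card_option, Fintype.card_fin]
    have hdeg : P.degree < (#(univ : Finset (Option (Fin (n+1)))) - 1 : ℕ) := by
      rw [hPdef, Lagrange.degree_nodal, card_erase_of_mem (mem_univ j), card_univ,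
        Fintype.card_fin, hcards]
      exact_mod_cast Nat.lt_of_le_of_lt (Nat.sub_le _ _) (by omega)
    have hkey := sum_eval_mul_prod_inv_eq_zero univ v hvinj.injOn P hdeg
    -- identify the erase sets
    have herase_none : (univ : Finset (Option (Fin (n+1)))).erase none = univ.image some := by
      ext o; cases o <;> simp
    have herase_some : ∀ k : Fin (n+1),
        (univ : Finset (Option (Fin (n+1)))).erase (some k)
        = insert none ((univ.erase k).image some) := by
      intro k; ext o; cases o <;> simp [eq_comm]
    have hsome_inj : ∀ (t : Finset (Fin (n+1))) (g : Option (Fin (n+1)) → ℝ),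
        ∏ o ∈ t.image some, g o = ∏ l ∈ t, g (some l) := by
      intro t g
      exact prod_image (fun x _ y _ h => Option.some_injective _ h)
    rw [Fintype.sum_option] at hkey
    rw [herase_none, hsome_inj] at hkey
    have hkey2 : ∑ k : Fin (n+1), P.eval (v (some k)) * ∏ o ∈ univ.erase (some k),
        (v (some k) - v o)⁻¹ = -(P.eval (u j) * ∏ l : Fin (n+1), (u j - b l)⁻¹) := by
      have := hkey
      simp only [hvdef, Option.elim] at this ⊢
      linarith [this]
    have hB : (∏ k, (u j - b k)) ≠ 0 :=
      prod_ne_zero_iff.mpr fun k _ => sub_ne_zero.mpr (hub j k)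
    have hterm : ∀ k : Fin (n+1),
        ((∏ m, (b k - u m)) / (∏ l ∈ Finset.univ \ {k}, (b k - b l))) / ((u j - b k)^2)
        = P.eval (v (some k)) * ∏ o ∈ univ.erase (some k), (v (some k) - v o)⁻¹ := by
      intro k
      have hc : b k - u j ≠ 0 := sub_ne_zero.mpr (Ne.symm (hub j k))
      have hsplit : ∏ m, (b k - u m)
          = (∏ m ∈ (univ : Finset (Fin n)).erase j, (b k - u m)) * (b k - u j) :=
        (prod_erase_mul _ _ (mem_univ j)).symm
      have hD : (∏ l ∈ Finset.univ \ {k}, (b k - b l)) ≠ 0 := by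
        refine prod_ne_zero_iff.mpr fun l hl => sub_ne_zero.mpr fun h => ?_
        rcases mem_sdiff.mp hl with ⟨-, hlk⟩
        exact hlk (mem_singleton.mpr (hbinj h).symm)
      rw [herase_some k, prod_insert (by simp), hsome_inj]
      simp only [hvdef, Option.elim]
      rw [hPdef, Lagrange.eval_nodal, hsplit]
      simp only [erase_eq]
      rw [show (u j - b k)^2 = (b k - u j)^2 by ring]
      field_simp
      simp only [one_div]
      rw [prod_inv_distrib, mul_assoc, mul_inv_cancel₀ hD, mul_one]
    rw [show (∑ k, ((∏ m, (b k - u m)) / (∏ l ∈ Finset.univ \ {k}, (b k - b l))) /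
        ((u j - b k)^2))
      = ∑ k : Fin (n+1), P.eval (v (some k)) * ∏ o ∈ univ.erase (some k), (v (some k) - v o)⁻¹
      from sum_congr rfl fun k _ => hterm k, hkey2]
    have hderiv : deriv (fun t : ℝ => ∏ m, (t - u m)) (u j) = P.eval (u j) := by
      have hfun : (fun t : ℝ => ∏ m, (t - u m))
          = fun t => (Lagrange.nodal univ u).eval t := by
        funext t; rw [Lagrange.eval_nodal]
      rw [hfun, Polynomial.deriv, Lagrange.eval_nodal_derivative_eval_node_eq (mem_univ j),
        hPdef]
    rw [hderiv, prod_inv_distrib]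
    field_simp
    try ring
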